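/- Let n = 2k, θ ∈ (0, π/4], and let A be an n×n real matrix in block form [[A₁₁, A₁₂],[A₂₁, A₂₂]] with A₁₂ invertible. Set = A₁₂⁻¹A₁₁A₁₂ + A₂₂ and B̂ = A₂₁A₁₂ − A₂₂A₁₂⁻¹A₁₁A₁₂. If satisfies â_ii < 0 and cos(θ)|â_ii| > Σ_{j≠i}|â_ij| for all i, and B̂ satisfies b̂_ii < 0 and |b̂_ii| > Σ_{j≠i}|b̂_ij| for all i, then every eigenvalue λ of A satisfies |arg(λ)| > θ. -/

import Mathlib

set_option maxHeartbeats 1000000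

lemma sector_lb (θ : ℝ) (hθ1 : 0 < θ) (hθ2 : θ ≤ Real.pi/4) (z : ℂ)
    (hz : |z.arg| ≤ θ) (a b : ℝ) (ha : a < 0) (hb : b < 0) :
    ‖z‖ * Real.cos θ * (-a) + (-b) ≤ ‖z^2 - a*z - b‖ := by
  have hπ : 0 < Real.pi := Real.pi_pos
  have hθπ2 : θ ≤ Real.pi/2 := by linarith
  have hcosθ : 0 ≤ Real.cos θ := Real.cos_nonneg_of_mem_Icc ⟨by linarith, hθπ2⟩
  have habs0 : 0 ≤ ‖z‖ := norm_nonneg z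
  have h1 : ‖z‖ * Real.cos θ ≤ z.re := by
    rcases eq_or_ne z 0 with rfl | hz0
    · simp
    · have hca := Complex.cos_arg hz0
      have habs : 0 < ‖z‖ := norm_pos_iff.mpr hz0
      have hc : Real.cos θ ≤ Real.cos z.arg := by
        rw [← Real.cos_abs z.arg]
        exact Real.cos_le_cos_of_nonneg_of_le_pi (abs_nonneg _) (by linarith) hz
      have : ‖z‖ * Real.cos z.arg = z.re := by
        rw [hca]; field_simp
      nlinarith
  have hsc : Real.sin θ ≤ Real.cos θ := by
    rw [← Real.sin_pi_div_two_sub]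
    exact Real.strictMonoOn_sin.monotoneOn ⟨by linarith, by linarith⟩
      ⟨by linarith, by linarith⟩ (by linarith)
  have hsinθ : 0 ≤ Real.sin θ := Real.sin_nonneg_of_nonneg_of_le_pi (by linarith) (by linarith)
  have h2 : |z.im| ≤ ‖z‖ * Real.cos θ := by
    have hsin : |z.im| ≤ ‖z‖ * Real.sin θ := by
      rcases eq_or_ne z 0 with rfl | hz0
      · simp
      · have hs := Complex.sin_arg z
        have habs : 0 < ‖z‖ := norm_pos_iff.mpr hz0
        have hargmem : z.arg ∈ Set.Icc (-(Real.pi/2)) (Real.pi/2) := by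
          constructor <;> [nlinarith [abs_le.1 hz]; nlinarith [abs_le.1 hz]]
        have hθmem : θ ∈ Set.Icc (-(Real.pi/2)) (Real.pi/2) := ⟨by linarith, hθπ2⟩
        have hθmem' : -θ ∈ Set.Icc (-(Real.pi/2)) (Real.pi/2) := ⟨by linarith, by linarith⟩
        have hle1 : Real.sin z.arg ≤ Real.sin θ :=
          Real.strictMonoOn_sin.monotoneOn hargmem hθmem (abs_le.1 hz).2
        have hle2 : -(Real.sin θ) ≤ Real.sin z.arg := by
          rw [← Real.sin_neg]
          exact Real.strictMonoOn_sin.monotoneOn hθmem' hargmem (abs_le.1 hz).1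
        have hsabs : |Real.sin z.arg| ≤ Real.sin θ := abs_le.2 ⟨hle2, hle1⟩
        have him : z.im = ‖z‖ * Real.sin z.arg := by rw [hs]; field_simp
        rw [him, abs_mul, abs_of_pos habs]
        exact mul_le_mul_of_nonneg_left hsabs habs.le
    exact hsin.trans (mul_le_mul_of_nonneg_left hsc habs0)
  have hre := Complex.re_le_norm (z^2 - a*z - b)
  have hre2 : (z^2 - (a:ℂ)*z - (b:ℂ)).re = z.re^2 - z.im^2 - a*z.re - b := by
    simp [pow_two, Complex.mul_re, Complex.sub_re, Complex.ofReal_re, Complex.ofReal_im]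
  have him2 : z.im^2 ≤ z.re^2 := by nlinarith [sq_abs z.im, abs_nonneg z.im]
  nlinarith [mul_le_mul_of_nonneg_left h1 (le_of_lt (neg_pos.2 ha))]

theorem fractional_order_sector {k : ℕ} (θ : ℝ) (hθ : 0 < θ ∧ θ ≤ Real.pi / 4)
    (A₁₁ A₁₂ A₂₁ A₂₂ : Matrix (Fin k) (Fin k) ℝ) (h12 : IsUnit A₁₂.det)
    (Ahat Bhat : Matrix (Fin k) (Fin k) ℝ)
    (hAhat : Ahat = A₁₂⁻¹ * A₁₁ * A₁₂ + A₂₂)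
    (hBhat : Bhat = A₂₁ * A₁₂ - A₂₂ * A₁₂⁻¹ * A₁₁ * A₁₂)
    (hAneg : ∀ i, Ahat i i < 0)
    (hAdom : ∀ i, ∑ j ∈ Finset.univ.erase i, |Ahat i j| < Real.cos θ * |Ahat i i|)
    (hBneg : ∀ i, Bhat i i < 0)
    (hBdom : ∀ i, ∑ j ∈ Finset.univ.erase i, |Bhat i j| < |Bhat i i|) :
    ∀ lam ∈ spectrum ℂ ((Matrix.fromBlocks A₁₁ A₁₂ A₂₁ A₂₂).map (Complex.ofReal)),
      θ < |lam.arg| := by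
  obtain ⟨hθ1, hθ2⟩ := hθ
  intro lam hlam
  by_contra hcon
  push_neg at hcon
  -- complex versions of the matrices
  set f : ℝ →+* ℂ := Complex.ofRealHom with hf
  set M₁₁ : Matrix (Fin k) (Fin k) ℂ := A₁₁.map f with hM11
  set M₁₂ : Matrix (Fin k) (Fin k) ℂ := A₁₂.map f with hM12
  set M₂₁ : Matrix (Fin k) (Fin k) ℂ := A₂₁.map f with hM21
  set M₂₂ : Matrix (Fin k) (Fin k) ℂ := A₂₂.map f with hM22
  set Ac : Matrix (Fin k) (Fin k) ℂ := Ahat.map f with hAcdef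
  set Bc : Matrix (Fin k) (Fin k) ℂ := Bhat.map f with hBcdef
  have hdet : IsUnit M₁₂.det := by
    have : M₁₂.det = f A₁₂.det := (RingHom.map_det f A₁₂).symm
    rw [this]
    exact h12.map f
  have hMinv1 : M₁₂ * M₁₂⁻¹ = 1 := Matrix.mul_nonsing_inv _ hdet
  have hMinv2 : M₁₂⁻¹ * M₁₂ = 1 := Matrix.nonsing_inv_mul _ hdet
  have hmapinv : (A₁₂⁻¹).map (f : ℝ → ℂ) = M₁₂⁻¹ := by
    symm
    apply Matrix.inv_eq_left_inv
    rw [hM12, ← Matrix.map_mul, Matrix.nonsing_inv_mul _ h12]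
    exact Matrix.map_one _ f.map_zero f.map_one
  have hAc : Ac = M₁₂⁻¹ * M₁₁ * M₁₂ + M₂₂ := by
    rw [hAcdef, hAhat, ← RingHom.mapMatrix_apply]
    rw [map_add, map_mul, map_mul]
    simp only [RingHom.mapMatrix_apply]
    rw [hmapinv]
  have hBc : Bc = M₂₁ * M₁₂ - M₂₂ * M₁₂⁻¹ * M₁₁ * M₁₂ := by
    rw [hBcdef, hBhat, ← RingHom.mapMatrix_apply]
    rw [map_sub, map_mul, map_mul, map_mul, map_mul]
    simp only [RingHom.mapMatrix_apply]
    rw [hmapinv]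
  -- eigenvector
  have hsing : ((lam • (1 : Matrix (Fin k ⊕ Fin k) (Fin k ⊕ Fin k) ℂ)) -
      Matrix.fromBlocks M₁₁ M₁₂ M₂₁ M₂₂).det = 0 := by
    rw [spectrum.mem_iff] at hlam
    by_contra hne
    apply hlam
    rw [Matrix.fromBlocks_map] at hlam ⊢
    apply (Matrix.isUnit_iff_isUnit_det _).2
    rw [Algebra.algebraMap_eq_smul_one]
    exact isUnit_iff_ne_zero.2 hne
  obtain ⟨v, hv0, hveq⟩ := Matrix.exists_mulVec_eq_zero_iff.2 hsing
  have hMv : (Matrix.fromBlocks M₁₁ M₁₂ M₂₁ M₂₂).mulVec v = lam • v := by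
    rw [Matrix.sub_mulVec, Matrix.smul_mulVec, Matrix.one_mulVec] at hveq
    exact (sub_eq_zero.mp hveq).symm
  set v₁ : Fin k → ℂ := v ∘ Sum.inl with hv1def
  set v₂ : Fin k → ℂ := v ∘ Sum.inr with hv2def
  rw [Matrix.fromBlocks_mulVec] at hMv
  have hE1 : M₁₁.mulVec v₁ + M₁₂.mulVec v₂ = lam • v₁ := by
    funext i; exact congrFun hMv (Sum.inl i)
  have hE2 : M₂₁.mulVec v₁ + M₂₂.mulVec v₂ = lam • v₂ := by
    funext i; exact congrFun hMv (Sum.inr i)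
  set u : Fin k → ℂ := M₁₂⁻¹.mulVec v₁ with hu
  have hv₁ : M₁₂.mulVec u = v₁ := by
    rw [hu, Matrix.mulVec_mulVec, hMinv1, Matrix.one_mulVec]
  have hv₂ : v₂ = lam • u - (M₁₂⁻¹ * M₁₁ * M₁₂).mulVec u := by
    have key : (M₁₂⁻¹ * M₁₁ * M₁₂).mulVec u = (M₁₂⁻¹ * M₁₁).mulVec v₁ := by
      rw [← Matrix.mulVec_mulVec, hv₁]
    have h := congrArg M₁₂⁻¹.mulVec hE1
    rw [Matrix.mulVec_add, Matrix.mulVec_mulVec, Matrix.mulVec_mulVec, hMinv2,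
      Matrix.one_mulVec, Matrix.mulVec_smul] at h
    rw [← hu] at h
    rw [key, ← h]; abel
  have hu0 : u ≠ 0 := by
    intro h
    apply hv0
    have hv1' : v₁ = 0 := by rw [← hv₁, h, Matrix.mulVec_zero]
    have hv2' : v₂ = 0 := by rw [hv₂, h, Matrix.mulVec_zero, smul_zero, sub_zero]
    funext x
    cases x with
    | inl i => exact congrFun hv1' i
    | inr i => exact congrFun hv2' i
  clear_value u v₁ v₂
  -- the quadratic eigen-equation
  have hQ : lam ^ 2 • u = lam • Ac.mulVec u + Bc.mulVec u := by
    have h2 := hE2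
    rw [← hv₁, hv₂] at h2
    rw [Matrix.mulVec_mulVec] at h2
    rw [Matrix.mulVec_sub, Matrix.mulVec_smul, Matrix.mulVec_mulVec] at h2
    rw [smul_sub, smul_smul] at h2
    have e1 : M₂₂ * M₁₂⁻¹ * M₁₁ * M₁₂ = M₂₂ * (M₁₂⁻¹ * M₁₁ * M₁₂) := by
      simp only [Matrix.mul_assoc]
    rw [hAc, hBc, e1, Matrix.add_mulVec, Matrix.sub_mulVec]
    funext i
    have h2i := congrFun h2 i
    simp only [Pi.add_apply, Pi.sub_apply, Pi.smul_apply, smul_eq_mul] at h2i ⊢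
    linear_combination -h2i
    -- pick maximal coordinate
  have hne : Nonempty (Fin k) := by
    by_contra h
    exact hu0 (funext fun i => absurd ⟨i⟩ h)
  obtain ⟨i, -, hmax⟩ := Finset.exists_max_image Finset.univ
    (fun j => ‖u j‖) ⟨Classical.arbitrary _, Finset.mem_univ _⟩
  have hui : 0 < ‖u i‖ := by
    obtain ⟨j, hj⟩ := Function.ne_iff.1 hu0
    have : 0 < ‖u j‖ := by
      simpa using (norm_pos_iff.mpr hj)
    exact lt_of_lt_of_le this (hmax j (Finset.mem_univ j))
  -- row equation
  have hsplitA : ∑ j, ((Ahat i j : ℂ)) * u j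
      = (Ahat i i : ℂ) * u i + ∑ j ∈ Finset.univ.erase i, (Ahat i j : ℂ) * u j :=
    (Finset.add_sum_erase _ _ (Finset.mem_univ i)).symm
  have hsplitB : ∑ j, ((Bhat i j : ℂ)) * u j
      = (Bhat i i : ℂ) * u i + ∑ j ∈ Finset.univ.erase i, (Bhat i j : ℂ) * u j :=
    (Finset.add_sum_erase _ _ (Finset.mem_univ i)).symm
  have hexpand : ∑ j ∈ Finset.univ.erase i, (lam * (Ahat i j : ℂ) + (Bhat i j : ℂ)) * u j
      = lam * ∑ j ∈ Finset.univ.erase i, (Ahat i j : ℂ) * u j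
        + ∑ j ∈ Finset.univ.erase i, (Bhat i j : ℂ) * u j := by
    rw [Finset.mul_sum, ← Finset.sum_add_distrib]
    exact Finset.sum_congr rfl (fun j _ => by ring)
  have hrow : (lam ^ 2 - (Ahat i i : ℂ) * lam - (Bhat i i : ℂ)) * u i
      = ∑ j ∈ Finset.univ.erase i, (lam * (Ahat i j : ℂ) + (Bhat i j : ℂ)) * u j := by
    have h := congrFun hQ i
    have hA : Ac.mulVec u i = ∑ j, ((Ahat i j : ℂ)) * u j := by
      simp only [hAcdef, Matrix.mulVec, dotProduct, Matrix.map_apply]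
      rfl
    have hB : Bc.mulVec u i = ∑ j, ((Bhat i j : ℂ)) * u j := by
      simp only [hBcdef, Matrix.mulVec, dotProduct, Matrix.map_apply]
      rfl
    simp only [Pi.add_apply, Pi.smul_apply, smul_eq_mul, hA, hB] at h
    rw [hexpand]
    linear_combination h + lam * hsplitA + hsplitB
  -- estimates
  set x := ‖lam‖ with hx
  have hx0 : 0 ≤ x := norm_nonneg lam
  have key1 : ‖lam ^ 2 - (Ahat i i : ℂ) * lam - (Bhat i i : ℂ)‖ * ‖u i‖
      ≤ ∑ j ∈ Finset.univ.erase i, (x * |Ahat i j| + |Bhat i j|) * ‖u j‖ := by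
    rw [← norm_mul, hrow]
    refine le_trans (norm_sum_le _ _) (Finset.sum_le_sum fun j _ => ?_)
    rw [norm_mul]
    refine mul_le_mul_of_nonneg_right ?_ (norm_nonneg _)
    refine le_trans (norm_add_le _ _) ?_
    rw [norm_mul, Complex.norm_real, Complex.norm_real, Real.norm_eq_abs, Real.norm_eq_abs]
  have key2 : ∑ j ∈ Finset.univ.erase i, (x * |Ahat i j| + |Bhat i j|) * ‖u j‖
      ≤ (x * (∑ j ∈ Finset.univ.erase i, |Ahat i j|)
          + ∑ j ∈ Finset.univ.erase i, |Bhat i j|) * ‖u i‖ := by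
    rw [Finset.mul_sum, ← Finset.sum_add_distrib, Finset.sum_mul]
    refine Finset.sum_le_sum fun j _ => ?_
    refine mul_le_mul_of_nonneg_left (hmax j (Finset.mem_univ j)) ?_
    positivity
  have hcosθ : 0 ≤ Real.cos θ := by
    apply Real.cos_nonneg_of_mem_Icc
    constructor
    · linarith [Real.pi_pos]
    · linarith [Real.pi_pos]
  have key3 : (x * (∑ j ∈ Finset.univ.erase i, |Ahat i j|)
          + ∑ j ∈ Finset.univ.erase i, |Bhat i j|) * ‖u i‖
      < (x * Real.cos θ * (-(Ahat i i)) + (-(Bhat i i))) * ‖u i‖ := by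
    have hA := hAdom i
    have hB := hBdom i
    rw [abs_of_neg (hAneg i)] at hA
    rw [abs_of_neg (hBneg i)] at hB
    have h1 : x * (∑ j ∈ Finset.univ.erase i, |Ahat i j|) ≤ x * (Real.cos θ * (-(Ahat i i))) :=
      mul_le_mul_of_nonneg_left hA.le hx0
    have := norm_nonneg (u i)
    nlinarith
  have lb := sector_lb θ hθ1 hθ2 lam hcon (Ahat i i) (Bhat i i) (hAneg i) (hBneg i)
  have lb' : (x * Real.cos θ * (-(Ahat i i)) + (-(Bhat i i))) * ‖u i‖
      ≤ ‖lam ^ 2 - (Ahat i i : ℂ) * lam - (Bhat i i : ℂ)‖ * ‖u i‖ := by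
    refine mul_le_mul_of_nonneg_right ?_ (norm_nonneg _)
    have : lam ^ 2 - (Ahat i i : ℂ) * lam - (Bhat i i : ℂ)
        = lam ^ 2 - ((Ahat i i : ℂ)) * lam - ((Bhat i i : ℂ)) := rfl
    exact lb
  linarith [key1, key2, key3, lb']
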